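/- Let x, y ∈ ℂ^{J_n} with Z-transforms X, Y. If there exist a factorization Y = Y₁·Y₂ into polynomials, a constant γ with |γ| = 1, and τ ∈ ℤ^d such that X(z) = γ z^τ Y₁(z) · conj(Y₂(conj(z)⁻¹)) for all z ≠ 0, then |x̂(ω)| = |ŷ(ω)| for all ω ∈ ℝ^d. -/

import Mathlib

open scoped Real ComplexConjugate BigOperators

/-- The discrete-time Fourier transform of `x ∈ ℂ^{J_n}`. -/
noncomputable def dtft {d : ℕ} {n : Fin d → ℕ}
    (x : (∀ i, Fin (n i)) → ℂ) (ω : Fin d → ℝ) : ℂ :=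
  ∑ j : ∀ i, Fin (n i),
    x j * Complex.exp ((-2 * π * Complex.I) * (∑ i, ((j i : ℕ) : ℝ) * ω i / (n i)))

/-- The Z-transform of `x ∈ ℂ^{J_n}`: `X(z) = ∑_{j ∈ J_n} x_j z^j`. -/
noncomputable def ztransform {d : ℕ} {n : Fin d → ℕ}
    (x : (∀ i, Fin (n i)) → ℂ) (z : Fin d → ℂ) : ℂ :=
  ∑ j : ∀ i, Fin (n i), x j * ∏ i, (z i) ^ (j i : ℕ)

lemma dtft_eq_ztransform' {d : ℕ} {n : Fin d → ℕ}
    (x : (∀ i, Fin (n i)) → ℂ) (ω : Fin d → ℝ) :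
    dtft x ω = ztransform x
      (fun i => Complex.exp ((-2 * π * Complex.I) * (ω i / (n i)))) := by
  refine Finset.sum_congr rfl fun j _ => ?_
  congr 1
  simp only [← Complex.exp_nat_mul, ← Complex.exp_sum]
  congr 1
  push_cast
  rw [Finset.mul_sum]
  refine Finset.sum_congr rfl fun i _ => ?_
  ring

/-- If `X(z) = γ z^τ Y₁(z) conj(Y₂(conj(z)⁻¹))` for a factorization `Y = Y₁ Y₂`,
a unimodular constant `γ` and `τ ∈ ℤ^d`, then `x` and `y` have the same Fourier
magnitudes. -/
theorem dtft_eq_of_ztransform_factorization {d : ℕ} {n : Fin d → ℕ}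
    (x y : (∀ i, Fin (n i)) → ℂ)
    (Y₁ Y₂ : (Fin d → ℂ) → ℂ) (γ : ℂ) (hγ : ‖γ‖ = 1) (τ : Fin d → ℤ)
    (hY : ∀ z : Fin d → ℂ, ztransform y z = Y₁ z * Y₂ z)
    (hX : ∀ z : Fin d → ℂ, (∀ i, z i ≠ 0) →
      ztransform x z =
        γ * (∏ i, (z i) ^ (τ i)) * Y₁ z * conj (Y₂ (fun i => (conj (z i))⁻¹))) :
    ∀ ω : Fin d → ℝ, ‖dtft x ω‖ = ‖dtft y ω‖ := by
  intro ω
  set z : Fin d → ℂ := fun i => Complex.exp ((-2 * π * Complex.I) * (ω i / (n i))) with hz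
  have hz0 : ∀ i, z i ≠ 0 := fun i => Complex.exp_ne_zero _
  have hnorm : ∀ i, ‖z i‖ = 1 := by
    intro i
    rw [hz]
    simp only [Complex.norm_exp]
    norm_num [Complex.mul_re, Complex.ofReal_re, Complex.ofReal_im, Complex.I_re, Complex.I_im]
  have hconj : ∀ i, (conj (z i))⁻¹ = z i := by
    intro i
    rw [hz]
    rw [← Complex.exp_conj, ← Complex.exp_neg]
    congr 1
    simp only [map_mul, map_neg, map_ofNat, Complex.conj_I, Complex.conj_ofReal, map_div₀,
      map_natCast]
    ring
  have hfun : (fun i => (conj (z i))⁻¹) = z := funext hconj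
  rw [dtft_eq_ztransform' x ω, dtft_eq_ztransform' y ω, ← hz, hX z hz0, hY z, hfun]
  rw [norm_mul, norm_mul, norm_mul, norm_mul, hγ, RCLike.norm_conj]
  have : ‖∏ i, (z i) ^ (τ i)‖ = 1 := by
    rw [norm_prod]
    refine Finset.prod_eq_one fun i _ => ?_
    rw [norm_zpow, hnorm, one_zpow]
  rw [this]
  ring
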